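/- There exists an SPR instance admitting no stable matching. Concretely: with students S = {s_a, s_b}, projects P = {p_a, p_b}, one resource r with capacity 1 compatible with both projects, student preferences p_a ≻_{s_a} p_b ≻_{s_a} ∅ and p_b ≻_{s_b} p_a ≻_{s_b} ∅, and project preferences s_b ≻_{p_a} s_a ≻_{p_a} ∅ and s_a ≻_{p_b} s_b ≻_{p_b} ∅, no feasible matching (Y, μ) is both nonwasteful and fair. -/
import Mathlib


open scoped Classical
open Finset

/-- A Student-Project-Resource (SPR) instance.  Students have strict preferences
over `Option P` (`none` = being unmatched, ∅), projects over `Option S`.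
Each resource has a positive capacity and a set of compatible projects. -/
structure SPR (S P R : Type) [Fintype S] [Fintype R] where
  prefS : S → Option P → Option P → Prop
  prefP : P → Option S → Option S → Prop
  q : R → ℕ
  qpos : ∀ r, 0 < q r
  T : R → Set P

namespace SPR

variable {S P R : Type} [Fintype S] [Fintype R] (I : SPR S P R)

/-- Project `p` is acceptable to student `s`. -/
def accS (s : S) (p : P) : Prop := I.prefS s (some p) none

/-- Student `s` is acceptable to project `p`. -/
def accP (p : P) (s : S) : Prop := I.prefP p (some s) none

/-- A matching assigns each student at most one project, acceptable to both. -/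
def IsMatching (Y : S → Option P) : Prop :=
  ∀ s p, Y s = some p → I.accS s p ∧ I.accP p s

/-- An allocation maps every resource to a compatible project. -/
def IsAlloc (μ : R → P) : Prop := ∀ r, μ r ∈ I.T r

/-- Total capacity provided to project `p` by allocation `μ`. -/
noncomputable def cap (μ : R → P) (p : P) : ℕ :=
  ∑ r ∈ univ.filter (fun r => μ r = p), I.q r

/-- Number of students matched to project `p` in matching `Y`. -/
noncomputable def assigned (Y : S → Option P) (p : P) : ℕ :=
  (univ.filter (fun s => Y s = some p)).card

/-- `(Y, μ)` is feasible. -/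
def Feasible (Y : S → Option P) (μ : R → P) : Prop :=
  I.IsMatching Y ∧ I.IsAlloc μ ∧ ∀ p, SPR.assigned Y p ≤ I.cap μ p

/-- `(s, p)` is a claiming pair of matching `Y`. -/
def ClaimingPair (Y : S → Option P) (s : S) (p : P) : Prop :=
  I.accP p s ∧ Y s ≠ some p ∧ I.prefS s (some p) (Y s) ∧
    ∃ μ', I.Feasible (Function.update Y s (some p)) μ'

/-- `(s, p)` is an envious pair of matching `Y`. -/
def EnviousPair (Y : S → Option P) (s : S) (p : P) : Prop :=
  I.accP p s ∧ Y s ≠ some p ∧ I.prefS s (some p) (Y s) ∧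
    ∃ s', Y s' = some p ∧ I.prefP p (some s) (some s')

def Nonwasteful (Y : S → Option P) (μ : R → P) : Prop :=
  I.Feasible Y μ ∧ ∀ s p, ¬ I.ClaimingPair Y s p

def Fair (Y : S → Option P) (μ : R → P) : Prop :=
  I.Feasible Y μ ∧ ∀ s p, ¬ I.EnviousPair Y s p

def Stable (Y : S → Option P) (μ : R → P) : Prop :=
  I.Nonwasteful Y μ ∧ I.Fair Y μ

/-- `Y'` Pareto dominates `Y` (students all weakly better, one strictly). -/
def ParetoDom (Y' Y : S → Option P) : Prop :=
  (∀ s, Y' s = Y s ∨ I.prefS s (Y' s) (Y s)) ∧ ∃ s, I.prefS s (Y' s) (Y s)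

/-- `Y` is Pareto efficient among feasible matchings. -/
def ParetoEfficient (Y : S → Option P) : Prop :=
  ∀ Y' μ', I.Feasible Y' μ' → ¬ I.ParetoDom Y' Y

end SPR

/-- Rank of options for student `s` in the two-student instance:
student `0` (= s_a) has p_a = 0 ≻ p_b = 1 ≻ ∅, student `1` (= s_b) has p_b ≻ p_a ≻ ∅. -/
def rankS2 (s : Fin 2) : Option (Fin 2) → ℕ
  | none => 1
  | some p => if p = s then 3 else 2

/-- Rank of options for project `p`: p_a = 0 has s_b ≻ s_a ≻ ∅, p_b = 1 has s_a ≻ s_b ≻ ∅. -/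
def rankP2 (p : Fin 2) : Option (Fin 2) → ℕ
  | none => 1
  | some s => if s = p then 2 else 3

/-- The SPR instance of Example 1: two students, two projects, one unit resource
compatible with both projects. -/
noncomputable def exampleSPR : SPR (Fin 2) (Fin 2) Unit where
  prefS s a b := rankS2 s b < rankS2 s a
  prefP p a b := rankP2 p b < rankP2 p a
  q _ := 1
  qpos _ := one_pos
  T _ := Set.univ

lemma exampleSPR_cap (μ : Unit → Fin 2) (p : Fin 2) :
    exampleSPR.cap μ p = if μ () = p then 1 else 0 := by
  simp [SPR.cap, exampleSPR, Finset.filter_singleton]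
  split <;> simp

lemma exampleSPR_assigned (Y : Fin 2 → Option (Fin 2)) (p : Fin 2) :
    SPR.assigned Y p = (if Y 0 = some p then 1 else 0) + (if Y 1 = some p then 1 else 0) := by
  simp [SPR.assigned, Finset.card_filter, Fin.sum_univ_two]
  split_ifs <;> rfl

lemma exampleSPR_isMatching (Y : Fin 2 → Option (Fin 2)) : exampleSPR.IsMatching Y := by
  intro s p _
  constructor
  · show rankS2 s none < rankS2 s (some p)
    simp [rankS2]; split <;> omega
  · show rankP2 p none < rankP2 p (some s)
    simp [rankP2]; split <;> omega

lemma exampleSPR_feasible (Y : Fin 2 → Option (Fin 2)) (μ : Unit → Fin 2)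
    (h : ∀ p, SPR.assigned Y p ≤ exampleSPR.cap μ p) : exampleSPR.Feasible Y μ :=
  ⟨exampleSPR_isMatching Y, fun _ => Set.mem_univ _, h⟩

/-- the instance of Example 1 admits no stable
(nonwasteful and fair) feasible matching. -/
theorem no_stable_matching_example :
    ¬ ∃ (Y : Fin 2 → Option (Fin 2)) (μ : Unit → Fin 2), exampleSPR.Stable Y μ := by
  rintro ⟨Y, μ, ⟨⟨hfeas, hnw⟩, ⟨_, hfair⟩⟩⟩
  obtain ⟨_, _, hcap⟩ := hfeas
  rcases hY0 : Y 0 with _ | p0 <;> rcases hY1 : Y 1 with _ | p1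
  · -- both unmatched: (0,0) is a claiming pair
    refine hnw 0 0 ⟨?_, by simp [hY0], ?_, fun _ => 0, exampleSPR_feasible _ _ ?_⟩
    · show rankP2 0 none < rankP2 0 (some 0); simp [rankP2]
    · rw [hY0]; show rankS2 0 none < rankS2 0 (some 0); simp [rankS2]
    · intro p
      rw [exampleSPR_assigned, exampleSPR_cap]
      fin_cases p <;> simp [Function.update, hY1]
  · fin_cases p1
    · -- Y = (none, some 0): (1,1) is a claiming pair
      refine hnw 1 1 ⟨?_, by simp [hY1], ?_, fun _ => 1, exampleSPR_feasible _ _ ?_⟩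
      · show rankP2 1 none < rankP2 1 (some 1); simp [rankP2]
      · rw [hY1]; show rankS2 1 (some 0) < rankS2 1 (some 1); simp [rankS2]
      · intro p
        rw [exampleSPR_assigned, exampleSPR_cap]
        fin_cases p <;> simp [Function.update, hY0]
    · -- Y = (none, some 1): (0,1) is an envious pair
      refine hfair 0 1 ⟨?_, by simp [hY0], ?_, 1, hY1, ?_⟩
      · show rankP2 1 none < rankP2 1 (some 0); simp [rankP2]
      · rw [hY0]; show rankS2 0 none < rankS2 0 (some 1); simp [rankS2]
      · show rankP2 1 (some 1) < rankP2 1 (some 0); simp [rankP2]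
  · fin_cases p0
    · -- Y = (some 0, none): (1,0) is an envious pair
      refine hfair 1 0 ⟨?_, by simp [hY1], ?_, 0, hY0, ?_⟩
      · show rankP2 0 none < rankP2 0 (some 1); simp [rankP2]
      · rw [hY1]; show rankS2 1 none < rankS2 1 (some 0); simp [rankS2]
      · show rankP2 0 (some 0) < rankP2 0 (some 1); simp [rankP2]
    · -- Y = (some 1, none): (0,0) is a claiming pair
      refine hnw 0 0 ⟨?_, by simp [hY0], ?_, fun _ => 0, exampleSPR_feasible _ _ ?_⟩
      · show rankP2 0 none < rankP2 0 (some 0); simp [rankP2]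
      · rw [hY0]; show rankS2 0 (some 1) < rankS2 0 (some 0); simp [rankS2]
      · intro p
        rw [exampleSPR_assigned, exampleSPR_cap]
        fin_cases p <;> simp [Function.update, hY1]
  · -- both matched: infeasible
    have h0 := hcap 0
    have h1 := hcap 1
    rw [exampleSPR_assigned, exampleSPR_cap] at h0 h1
    rw [hY0, hY1] at h0 h1
    obtain ⟨x, hμ⟩ : ∃ x, μ () = x := ⟨_, rfl⟩
    rw [hμ] at h0 h1
    fin_cases x <;>
      fin_cases p0 <;> fin_cases p1 <;> simp_all
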